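/- Let ψ : ℝ → ℂ be integrable. Then the Segal–Bargmann transform (Tψ)(z) = π^{-1/4} ∫_ℝ exp(-z²/2 - x²/2 + √2·x·z) ψ(x) dx is an entire function of z ∈ ℂ (complex-differentiable at every point of ℂ). -/

import Mathlib

open MeasureTheory Real

/-- If `ψ : ℝ → ℂ` is integrable, then its Segal–Bargmann transform
`(Tψ)(z) = π^{-1/4} ∫_ℝ exp(-z²/2 - x²/2 + √2·x·z) ψ(x) dx` is an entire function of
`z ∈ ℂ`. -/
theorem segal_bargmann_transform_entire (ψ : ℝ → ℂ)
    (hint : Integrable ψ) :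
    Differentiable ℂ (fun z : ℂ =>
      ((π ^ (-(1 / 4 : ℝ)) : ℝ) : ℂ) *
        ∫ x : ℝ, Complex.exp (-z ^ 2 / 2 - (x : ℂ) ^ 2 / 2 +
          (Real.sqrt 2 : ℂ) * (x : ℂ) * z) * ψ x) := by
  intro z₀
  apply DifferentiableAt.const_mul
  set F : ℂ → ℝ → ℂ := fun z x => Complex.exp (-z ^ 2 / 2 - (x : ℂ) ^ 2 / 2 +
      (Real.sqrt 2 : ℂ) * (x : ℂ) * z) * ψ x with hFdef
  set F' : ℂ → ℝ → ℂ := fun z x => (-z + (Real.sqrt 2 : ℂ) * (x : ℂ)) *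
      (Complex.exp (-z ^ 2 / 2 - (x : ℂ) ^ 2 / 2 +
      (Real.sqrt 2 : ℂ) * (x : ℂ) * z) * ψ x) with hF'def
  obtain ⟨R, hR0, hz₀R⟩ : ∃ R : ℝ, 0 ≤ R ∧ ‖z₀‖ + 1 ≤ R :=
    ⟨‖z₀‖ + 1, by positivity, le_refl _⟩
  obtain ⟨C, hCdef⟩ : ∃ C : ℝ, C = Real.exp (R + R^2/2 + (Real.sqrt 2 * (1 + R))^2/2) :=
    ⟨_, rfl⟩
  have sqrt2_nonneg : (0:ℝ) ≤ Real.sqrt 2 := Real.sqrt_nonneg 2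
  -- Re of the exponent bound
  have re_bound : ∀ (z : ℂ), ‖z‖ ≤ R → ∀ x : ℝ,
      (-z ^ 2 / 2 - (x : ℂ) ^ 2 / 2 + (Real.sqrt 2 : ℂ) * (x : ℂ) * z).re
        ≤ R^2/2 - x^2/2 + Real.sqrt 2 * R * |x| := by
    intro z hz x
    have h1 : |(z^2).re| ≤ ‖z‖^2 := by
      calc |(z^2).re| ≤ ‖z^2‖ := Complex.abs_re_le_norm _
        _ = ‖z‖^2 := by rw [norm_pow]
    have h2 : |z.re| ≤ ‖z‖ := Complex.abs_re_le_norm z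
    have hx2 : (((x:ℂ))^2).re = x^2 := by
      rw [← Complex.ofReal_pow]; exact Complex.ofReal_re _
    have hre : (-z ^ 2 / 2 - (x : ℂ) ^ 2 / 2 + (Real.sqrt 2 : ℂ) * (x : ℂ) * z).re
        = -(z^2).re/2 - x^2/2 + Real.sqrt 2 * x * z.re := by
      simp [hx2, Complex.add_re, Complex.sub_re, Complex.div_re, Complex.mul_re,
        Complex.ofReal_re, Complex.ofReal_im, Complex.normSq, Complex.ofReal_pow]
    rw [hre]
    have h3 : Real.sqrt 2 * x * z.re ≤ Real.sqrt 2 * |x| * ‖z‖ := by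
      calc Real.sqrt 2 * x * z.re ≤ |Real.sqrt 2 * x * z.re| := le_abs_self _
        _ = Real.sqrt 2 * |x| * |z.re| := by
            rw [abs_mul, abs_mul, abs_of_nonneg sqrt2_nonneg]
        _ ≤ Real.sqrt 2 * |x| * ‖z‖ := by
            apply mul_le_mul_of_nonneg_left h2; positivity
    have h4 : Real.sqrt 2 * |x| * ‖z‖ ≤ Real.sqrt 2 * R * |x| := by
      have : Real.sqrt 2 * |x| * ‖z‖ ≤ Real.sqrt 2 * |x| * R :=
        mul_le_mul_of_nonneg_left hz (by positivity)
      linarith [this]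
    have h5 : -(z^2).re/2 ≤ ‖z‖^2/2 := by
      have := (abs_le.mp h1).1; linarith
    have h6 : ‖z‖^2 ≤ R^2 := by nlinarith [norm_nonneg z]
    nlinarith [h3, h4, h5, h6]
  -- key bound on F'
  have key : ∀ z ∈ Metric.ball z₀ 1, ∀ x : ℝ, ‖F' z x‖ ≤ C * ‖ψ x‖ := by
    intro z hz x
    have hzR : ‖z‖ ≤ R := by
      have h := mem_ball_iff_norm.mp hz
      calc ‖z‖ = ‖z - z₀ + z₀‖ := by ring_nf
        _ ≤ ‖z - z₀‖ + ‖z₀‖ := norm_add_le _ _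
        _ ≤ R := by linarith
    have hnorm : ‖F' z x‖ = ‖-z + (Real.sqrt 2 : ℂ) * x‖ *
        (Real.exp ((-z ^ 2 / 2 - (x : ℂ) ^ 2 / 2 + (Real.sqrt 2 : ℂ) * (x : ℂ) * z).re) * ‖ψ x‖) := by
      simp [hF'def, map_mul, Complex.norm_exp]
    rw [hnorm]
    have h1 : ‖-z + (Real.sqrt 2 : ℂ) * x‖ ≤ R + Real.sqrt 2 * |x| := by
      calc ‖-z + (Real.sqrt 2 : ℂ) * x‖
          ≤ ‖-z‖ + ‖(Real.sqrt 2 : ℂ) * x‖ := norm_add_le _ _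
        _ = ‖z‖ + Real.sqrt 2 * |x| := by
            rw [norm_neg, norm_mul]
            simp [abs_of_nonneg sqrt2_nonneg]
        _ ≤ R + Real.sqrt 2 * |x| := by linarith
    have h2 : R + Real.sqrt 2 * |x| ≤ Real.exp (R + Real.sqrt 2 * |x|) := by
      linarith [Real.add_one_le_exp (R + Real.sqrt 2 * |x|)]
    have h3 := re_bound z hzR x
    have h4 : ‖-z + (Real.sqrt 2 : ℂ) * x‖ *
        (Real.exp ((-z ^ 2 / 2 - (x : ℂ) ^ 2 / 2 + (Real.sqrt 2 : ℂ) * (x : ℂ) * z).re) * ‖ψ x‖)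
        ≤ Real.exp (R + Real.sqrt 2 * |x|) * (Real.exp (R^2/2 - x^2/2 + Real.sqrt 2 * R * |x|) * ‖ψ x‖) := by
      apply mul_le_mul (le_trans h1 h2)
      · apply mul_le_mul_of_nonneg_right (Real.exp_le_exp.mpr h3) (norm_nonneg _)
      · positivity
      · positivity
    refine le_trans h4 ?_
    rw [← mul_assoc, ← Real.exp_add]
    apply mul_le_mul_of_nonneg_right _ (norm_nonneg _)
    rw [hCdef]
    apply Real.exp_le_exp.mpr
    have hs : Real.sqrt 2 ^ 2 = 2 := Real.sq_sqrt (by norm_num)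
    nlinarith [sq_nonneg (|x| - Real.sqrt 2 * (1 + R)), hs, sq_abs x, abs_nonneg x]
  -- measurability of F z for any z
  have hFmeas : ∀ z : ℂ, AEStronglyMeasurable (F z) volume := by
    intro z
    have hc : Continuous fun x : ℝ => Complex.exp (-z ^ 2 / 2 - (x:ℂ)^2/2 + (Real.sqrt 2:ℂ)*x*z) := by fun_prop
    exact hc.aestronglyMeasurable.mul hint.aestronglyMeasurable
  -- integrability of F z₀
  have hFint : Integrable (F z₀) volume := by
    apply Integrable.bdd_mul (c := Real.exp (R^2/2 + R^2)) hint
    · exact Continuous.aestronglyMeasurable (by fun_prop)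
    · refine Filter.Eventually.of_forall (fun x => ?_)
      have h3 := re_bound z₀ (by linarith) x
      have : ‖Complex.exp (-z₀ ^ 2 / 2 - (x : ℂ) ^ 2 / 2 + (Real.sqrt 2 : ℂ) * (x : ℂ) * z₀)‖
          = Real.exp ((-z₀ ^ 2 / 2 - (x : ℂ) ^ 2 / 2 + (Real.sqrt 2 : ℂ) * (x : ℂ) * z₀).re) := by
        simp [Complex.norm_exp]
      rw [this]
      apply Real.exp_le_exp.mpr
      have hs : Real.sqrt 2 ^ 2 = 2 := Real.sq_sqrt (by norm_num)
      nlinarith [sq_nonneg (|x| - Real.sqrt 2 * R), hs, sq_abs x, abs_nonneg x, h3]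
  -- differentiability of the integrand
  have hdiff : ∀ x : ℝ, ∀ z : ℂ, HasDerivAt (fun z => F z x) (F' z x) z := by
    intro x z
    have h1 : HasDerivAt (fun z : ℂ => -z ^ 2 / 2 - (x:ℂ)^2/2 + (Real.sqrt 2:ℂ)*x*z)
        (-z + (Real.sqrt 2:ℂ)*x) z := by
      have h := (((hasDerivAt_pow 2 z).neg.div_const 2).sub_const ((x:ℂ)^2/2)).add
        ((hasDerivAt_id z).const_mul ((Real.sqrt 2:ℂ)*x))
      refine HasDerivAt.congr_deriv h ?_
      push_cast; ring
    have := (h1.cexp).mul_const (ψ x)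
    refine HasDerivAt.congr_deriv this ?_
    simp [hF'def]; ring
  -- apply the dominated differentiation theorem
  have main := hasDerivAt_integral_of_dominated_loc_of_deriv_le (F := F) (F' := F')
    (bound := fun x => C * ‖ψ x‖) (x₀ := z₀) (Metric.ball_mem_nhds z₀ one_pos)
    (Filter.Eventually.of_forall hFmeas) hFint
    (by
      have hc : Continuous fun x : ℝ => (-z₀ + (Real.sqrt 2:ℂ)*x) *
          Complex.exp (-z₀ ^ 2 / 2 - (x:ℂ)^2/2 + (Real.sqrt 2:ℂ)*x*z₀) := by fun_prop
      exact (hc.aestronglyMeasurable.mul hint.aestronglyMeasurable).congr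
        (Filter.Eventually.of_forall fun x => by simp [hF'def, mul_assoc]))
    (Filter.Eventually.of_forall fun x => fun z hz => key z hz x)
    (hint.norm.const_mul C)
    (Filter.Eventually.of_forall fun x => fun z _ => hdiff x z)
  exact main.2.differentiableAt
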